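/- Let D be the set of non-increasing right-continuous functions U : ℝ → [0,1] with lim_{x→−∞} U(x) = 1 and lim_{x→+∞} U(x) = 0. For y ∈ (0,1] and U ∈ D set a^y(U) := inf{x ∈ ℝ : U(x) < y} ∈ ℝ ∪ {−∞} (for y ∈ (0,1) this is always a real number). Suppose U, V ∈ D are continuous on {x : x ≥ a¹(U)} and on {x : x ≥ a¹(V)} respectively (so the only possible discontinuity of each is a downward jump at a¹). Then the following are equivalent: (i) U ≥_s V (for every c ∈ ℝ and x₁ ≤ x₂, U(x₁) > V(x₁+c) implies U(x₂) ≥ V(x₂+c)); (ii) for every y ∈ (0,1): U(x + a^y(U)) ≥ V(x + a^y(V)) for all x > 0, and U(x + a^y(U)) ≤ V(x + a^y(V)) for all x < 0. Moreover, if in addition U ≥_s V and a¹(U) > −∞ and a¹(V) > −∞, then the inequalities in (ii) also hold for y = 1: U(x + a¹(U)) ≥ V(x + a¹(V)) for x > 0 and U(x + a¹(U)) ≤ V(x + a¹(V)) for x < 0. -/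
import Mathlib


open Filter Topology

/-- Membership in `D`: `U : ℝ → ℝ` is a non-increasing càdlàg function with values in
`[0,1]`, tending to `1` at `−∞` and to `0` at `+∞`. -/
def IsCCDF (U : ℝ → ℝ) : Prop :=
  (∀ x, U x ∈ Set.Icc (0 : ℝ) 1) ∧ Antitone U ∧
  (∀ x, ContinuousWithinAt U (Set.Ici x) x) ∧
  Tendsto U atBot (𝓝 1) ∧ Tendsto U atTop (𝓝 0)

/-- `U ≥ₛ V`: for all `c ∈ ℝ` and `x₁ ≤ x₂`, `U(x₁) > V(x₁+c)` implies `U(x₂) ≥ V(x₂+c)`. -/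
def MoreStretched (U V : ℝ → ℝ) : Prop :=
  ∀ c : ℝ, ∀ x₁ x₂ : ℝ, x₁ ≤ x₂ → V (x₁ + c) < U x₁ → V (x₂ + c) ≤ U x₂

/-- The quantile `a^y(U) := inf {x : U(x) < y}`, which for `U ∈ D` and `y ∈ (0,1)`
is a genuine real number. -/
noncomputable def quantileFun (U : ℝ → ℝ) (y : ℝ) : ℝ :=
  sInf {x : ℝ | U x < y}

/-- `a¹(U) := inf {x : U(x) < 1} ∈ ℝ ∪ {−∞}`, as an extended real. -/
noncomputable def aOne (U : ℝ → ℝ) : EReal :=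
  sInf ((fun x : ℝ => (x : EReal)) '' {x : ℝ | U x < 1})

private lemma nonempty_lt_set {U : ℝ → ℝ} (hU : Tendsto U atTop (𝓝 0)) {y : ℝ} (h0 : 0 < y) :
    {x : ℝ | U x < y}.Nonempty :=
  (hU.eventually (eventually_lt_nhds h0)).exists

private lemma bddBelow_lt_set {U : ℝ → ℝ} (hU : Tendsto U atBot (𝓝 1)) {y : ℝ} (h1 : y < 1) :
    BddBelow {x : ℝ | U x < y} := by
  obtain ⟨x₀, hx₀⟩ := eventually_atBot.mp (hU.eventually (eventually_gt_nhds h1))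
  refine ⟨x₀, fun z hz => ?_⟩
  by_contra h
  exact absurd (hx₀ z (le_of_not_ge h)) (not_lt.mpr hz.le)

private lemma U_lt_of_sInf_lt {U : ℝ → ℝ} (hUa : Antitone U) {y z : ℝ}
    (hne : {x : ℝ | U x < y}.Nonempty) (h : sInf {x : ℝ | U x < y} < z) : U z < y := by
  obtain ⟨w, hw, hwz⟩ := exists_lt_of_csInf_lt hne h
  exact lt_of_le_of_lt (hUa hwz.le) hw

private lemma le_U_of_lt_sInf {U : ℝ → ℝ} {y z : ℝ}
    (hbdd : BddBelow {x : ℝ | U x < y}) (h : z < sInf {x : ℝ | U x < y}) : y ≤ U z := by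
  by_contra hc
  push_neg at hc
  exact absurd (csInf_le hbdd hc) (not_le.mpr h)

private lemma continuousAt_of_aOne {U : ℝ → ℝ}
    (hUcont : ContinuousOn U {x : ℝ | aOne U ≤ (x : EReal)}) (z r : ℝ)
    (hz : U z < 1) (hzr : z < r) : ContinuousAt U r := by
  have h1 : aOne U ≤ (z : EReal) := sInf_le ⟨z, hz, rfl⟩
  have hmem : {x : ℝ | aOne U ≤ (x : EReal)} ∈ 𝓝 r :=
    mem_of_superset (Ici_mem_nhds hzr)
      (fun w hw => le_trans h1 (EReal.coe_le_coe_iff.mpr hw))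
  exact hUcont.continuousAt hmem

private lemma bddBelow_of_aOne_ne_bot {U : ℝ → ℝ}
    (hne : ({x : ℝ | U x < 1}).Nonempty) (h : aOne U ≠ ⊥) :
    BddBelow {x : ℝ | U x < 1} := by
  obtain ⟨z, hz⟩ := hne
  have htop : aOne U ≠ ⊤ :=
    ne_top_of_le_ne_top (EReal.coe_ne_top z) (sInf_le ⟨z, hz, rfl⟩)
  refine ⟨(aOne U).toReal, fun w hw => ?_⟩
  have hle : aOne U ≤ (w : EReal) := sInf_le ⟨w, hw, rfl⟩
  rw [← EReal.coe_toReal htop h] at hle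
  exact_mod_cast hle

private lemma forward_pos {U V : ℝ → ℝ} (hs : MoreStretched U V) (y A B x : ℝ)
    (hA : ∀ z, z < A → y ≤ U z) (hB : ∀ z, B < z → V z < y)
    (hx : 0 < x) (hcont : ContinuousAt U (x + A)) : V (x + B) ≤ U (x + A) := by
  have key : ∀ ε ∈ Set.Ioo (0:ℝ) x, V (x + B) ≤ U (x + A - ε) := by
    rintro ε ⟨hε0, hεx⟩
    have h1 : V (A - ε/2 + (B - A + ε)) < U (A - ε/2) := by
      rw [show A - ε/2 + (B - A + ε) = B + ε/2 by ring]
      exact lt_of_lt_of_le (hB _ (by linarith)) (hA _ (by linarith))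
    have h2 := hs (B - A + ε) (A - ε/2) (x + A - ε) (by linarith) h1
    rwa [show x + A - ε + (B - A + ε) = x + B by ring] at h2
  have h0 : Tendsto (fun ε : ℝ => x + A - ε) (𝓝[>] (0:ℝ)) (𝓝 (x + A)) := by
    have h : Tendsto (fun ε : ℝ => x + A - ε) (𝓝 (0:ℝ)) (𝓝 (x + A - 0)) :=
      (continuous_const.sub continuous_id).tendsto (0:ℝ)
    rw [sub_zero] at h
    exact h.mono_left (nhdsWithin_le_nhds : 𝓝[>] (0:ℝ) ≤ 𝓝 0)
  have htend : Tendsto (fun ε : ℝ => U (x + A - ε)) (𝓝[>] (0:ℝ)) (𝓝 (U (x + A))) :=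
    hcont.tendsto.comp h0
  refine ge_of_tendsto htend ?_
  filter_upwards [Ioo_mem_nhdsGT_of_mem (Set.left_mem_Ico.mpr hx)] with ε hε
  exact key ε hε

private lemma forward_neg {U V : ℝ → ℝ} (hs : MoreStretched U V) (y A B x : ℝ)
    (hA2 : ∀ z, A < z → U z < y) (hB2 : ∀ z, z < B → y ≤ V z)
    (hx : x < 0) (hrc : ContinuousWithinAt U (Set.Ici (x + A)) (x + A)) :
    U (x + A) ≤ V (x + B) := by
  by_contra hcontr
  push_neg at hcontr
  have h' : Tendsto U (𝓝[>] (x+A)) (𝓝 (U (x+A))) :=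
    hrc.tendsto.mono_left (nhdsWithin_mono _ Set.Ioi_subset_Ici_self)
  have hev1 : ∀ᶠ w in 𝓝[>] (x+A), V (x+B) < U w := h'.eventually (eventually_gt_nhds hcontr)
  have hev2 : Set.Ioo (x+A) (A - x) ∈ 𝓝[>] (x+A) :=
    Ioo_mem_nhdsGT_of_mem ⟨le_refl _, by linarith⟩
  obtain ⟨w, hw1, hw2⟩ := (hev1.and (eventually_of_mem hev2 fun z hz => hz)).exists
  have h1 : V (w + (B - A - (w - (x+A)))) < U w := by
    rw [show w + (B - A - (w - (x+A))) = x + B by ring]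
    exact hw1
  have h2 := hs (B - A - (w - (x+A))) w (A + (w - (x+A))/2) (by linarith [hw2.2]) h1
  rw [show A + (w - (x+A))/2 + (B - A - (w - (x+A))) = B - (w - (x+A))/2 by ring] at h2
  have h3 : y ≤ V (B - (w - (x+A))/2) := hB2 _ (by linarith [hw2.1])
  have h4 : U (A + (w - (x+A))/2) < y := hA2 _ (by linarith [hw2.1])
  linarith

private lemma backward_aux {U V : ℝ → ℝ}
    (hU01 : ∀ x, U x ∈ Set.Icc (0:ℝ) 1) (hV01 : ∀ x, V x ∈ Set.Icc (0:ℝ) 1)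
    (hUa : Antitone U) (hUtop : Tendsto U atTop (𝓝 0)) (hVbot : Tendsto V atBot (𝓝 1))
    (H : ∀ y ∈ Set.Ioo (0:ℝ) 1, ∀ x > (0:ℝ), V (x + quantileFun V y) ≤ U (x + quantileFun U y)) :
    MoreStretched U V := by
  intro c x₁ x₂ h12 h1
  by_contra h2
  push_neg at h2
  set y' := (V (x₁ + c) + U x₁) / 2 with hy'
  have hV0 := (hV01 (x₁ + c)).1
  have hU1 := (hU01 x₁).2
  have hy'0 : 0 < y' := by rw [hy']; linarith
  have hy'1 : y' < 1 := by rw [hy']; linarith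
  set a' := quantileFun U y' with ha'
  set b' := quantileFun V y' with hb'
  have hb'le : b' ≤ x₁ + c := csInf_le (bddBelow_lt_set hVbot hy'1) (by
    show V (x₁ + c) < y'
    rw [hy']; linarith)
  have hx₁a' : x₁ ≤ a' := by
    by_contra hcon
    push_neg at hcon
    have := U_lt_of_sInf_lt hUa (nonempty_lt_set hUtop hy'0) hcon
    rw [hy'] at this; linarith
  rcases le_or_gt (x₂ + c) b' with hle | hlt
  · have hx : x₂ ≤ x₁ := by linarith
    have heq : x₁ = x₂ := le_antisymm h12 hx
    rw [heq] at h1; linarith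
  · have hkey := H y' ⟨hy'0, hy'1⟩ (x₂ + c - b') (by linarith)
    rw [show x₂ + c - b' + quantileFun V y' = x₂ + c by rw [← hb']; ring] at hkey
    have hmono : U (x₂ + c - b' + quantileFun U y') ≤ U x₂ := hUa (by rw [← ha']; linarith)
    linarith

/-- Suppose `U, V ∈ D` are continuous on `{x : x ≥ a¹(U)}` and `{x : x ≥ a¹(V)}`
respectively.  Then `U ≥ₛ V` if and only if for every `y ∈ (0,1)` one has
`U(x + a^y(U)) ≥ V(x + a^y(V))` for all `x > 0` and `U(x + a^y(U)) ≤ V(x + a^y(V))`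
for all `x < 0`.  Moreover, if in addition `U ≥ₛ V` and `a¹(U), a¹(V) > −∞`, then the
same two inequalities also hold with `y = 1`, i.e. with `a¹(U)` and `a¹(V)` (which are
then the genuine real infima of the corresponding sets). -/
theorem moreStretched_iff_quantile
    (U V : ℝ → ℝ) (hU : IsCCDF U) (hV : IsCCDF V)
    (hUcont : ContinuousOn U {x : ℝ | aOne U ≤ (x : EReal)})
    (hVcont : ContinuousOn V {x : ℝ | aOne V ≤ (x : EReal)}) :
    (MoreStretched U V ↔ ∀ y ∈ Set.Ioo (0 : ℝ) 1,
        (∀ x > (0 : ℝ), V (x + quantileFun V y) ≤ U (x + quantileFun U y)) ∧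
        (∀ x < (0 : ℝ), U (x + quantileFun U y) ≤ V (x + quantileFun V y))) ∧
    (MoreStretched U V → aOne U ≠ ⊥ → aOne V ≠ ⊥ →
        (∀ x > (0 : ℝ),
          V (x + sInf {z : ℝ | V z < 1}) ≤ U (x + sInf {z : ℝ | U z < 1})) ∧
        (∀ x < (0 : ℝ),
          U (x + sInf {z : ℝ | U z < 1}) ≤ V (x + sInf {z : ℝ | V z < 1}))) := by
  obtain ⟨hU01, hUa, hUrc, hUbot, hUtop⟩ := hU
  obtain ⟨hV01, hVa, hVrc, hVbot, hVtop⟩ := hV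
  constructor
  · constructor
    · intro hs y hy
      obtain ⟨hy0, hy1⟩ := hy
      have hUne : {x : ℝ | U x < y}.Nonempty := nonempty_lt_set hUtop hy0
      have hUbdd : BddBelow {x : ℝ | U x < y} := bddBelow_lt_set hUbot hy1
      have hVne : {x : ℝ | V x < y}.Nonempty := nonempty_lt_set hVtop hy0
      have hVbdd : BddBelow {x : ℝ | V x < y} := bddBelow_lt_set hVbot hy1
      constructor
      · intro x hx
        have hcont : ContinuousAt U (x + quantileFun U y) := by
          refine continuousAt_of_aOne hUcont (quantileFun U y + x/2) _ ?_ (by linarith)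
          have : U (quantileFun U y + x/2) < y :=
            U_lt_of_sInf_lt hUa hUne (by unfold quantileFun; linarith)
          linarith
        exact forward_pos hs y (quantileFun U y) (quantileFun V y) x
          (fun z hz => le_U_of_lt_sInf hUbdd hz)
          (fun z hz => U_lt_of_sInf_lt hVa hVne hz) hx hcont
      · intro x hx
        exact forward_neg hs y (quantileFun U y) (quantileFun V y) x
          (fun z hz => U_lt_of_sInf_lt hUa hUne hz)
          (fun z hz => le_U_of_lt_sInf hVbdd hz) hx (hUrc _)
    · intro H
      exact backward_aux hU01 hV01 hUa hUtop hVbot (fun y hy x hx => (H y hy).1 x hx)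
  · intro hs hUb hVb
    have hUne : {x : ℝ | U x < 1}.Nonempty := nonempty_lt_set hUtop one_pos
    have hVne : {x : ℝ | V x < 1}.Nonempty := nonempty_lt_set hVtop one_pos
    have hUbdd : BddBelow {x : ℝ | U x < 1} := bddBelow_of_aOne_ne_bot hUne hUb
    have hVbdd : BddBelow {x : ℝ | V x < 1} := bddBelow_of_aOne_ne_bot hVne hVb
    constructor
    · intro x hx
      have hcont : ContinuousAt U (x + sInf {z : ℝ | U z < 1}) := by
        refine continuousAt_of_aOne hUcont (sInf {z : ℝ | U z < 1} + x/2) _ ?_ (by linarith)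
        exact U_lt_of_sInf_lt hUa hUne (by linarith)
      exact forward_pos hs 1 (sInf {z : ℝ | U z < 1}) (sInf {z : ℝ | V z < 1}) x
        (fun z hz => le_U_of_lt_sInf hUbdd hz)
        (fun z hz => U_lt_of_sInf_lt hVa hVne hz) hx hcont
    · intro x hx
      have h1 : (1:ℝ) ≤ V (x + sInf {z : ℝ | V z < 1}) :=
        le_U_of_lt_sInf hVbdd (by linarith)
      exact le_trans (hU01 _).2 h1
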